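/- Let (X,d) be a metric space, ℓ ∈ (0,1), and {f_ν} a sequence of ℓ-Lipschitz self-maps of X with fixed points x_ν. For all ν ≥ 1 and x ∈ X, d(L_ν(x), x_ν) ≤ ℓ^{ν+1}·d(x, x_0) + Σ_{j=0}^{ν-1} ℓ^{ν-j}·d(x_j, x_{j+1}), where L_ν = f_ν ∘ ⋯ ∘ f_0. -/

import Mathlib

open Filter Topology Finset

variable {X : Type*}

/-- Left iterated function system: `LFS f ν = f ν ∘ f (ν-1) ∘ ⋯ ∘ f 0`. -/
def LFS (f : ℕ → X → X) : ℕ → X → X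
  | 0 => f 0
  | n + 1 => f (n + 1) ∘ LFS f n

/-- Quantitative estimate: for `ℓ`-Lipschitz self-maps `f ν` with fixed points `x ν`,
`d(L_ν(x), x_ν) ≤ ℓ^(ν+1) d(x, x_0) + ∑_{j<ν} ℓ^(ν-j) d(x_j, x_(j+1))` for all `ν ≥ 1`. -/
theorem stmt5 [MetricSpace X] (f : ℕ → X → X)
    (ℓ : ℝ) (hℓ0 : 0 < ℓ) (hℓ1 : ℓ < 1)
    (hlip : ∀ ν x y, dist (f ν x) (f ν y) ≤ ℓ * dist x y)
    (x : ℕ → X) (hfix : ∀ ν, f ν (x ν) = x ν) :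
    ∀ ν, 1 ≤ ν → ∀ z : X,
      dist (LFS f ν z) (x ν) ≤
        ℓ ^ (ν + 1) * dist z (x 0) +
          ∑ j ∈ Finset.range ν, ℓ ^ (ν - j) * dist (x j) (x (j + 1)) := by
  have key : ∀ ν, ∀ z : X,
      dist (LFS f ν z) (x ν) ≤
        ℓ ^ (ν + 1) * dist z (x 0) +
          ∑ j ∈ Finset.range ν, ℓ ^ (ν - j) * dist (x j) (x (j + 1)) := by
    intro ν
    induction ν with
    | zero =>
      intro z
      simp only [LFS, Finset.range_zero, Finset.sum_empty, add_zero, zero_add, pow_one]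
      calc dist (f 0 z) (x 0) = dist (f 0 z) (f 0 (x 0)) := by rw [hfix]
        _ ≤ ℓ * dist z (x 0) := hlip 0 z (x 0)
    | succ n ih =>
      intro z
      have step : dist (LFS f (n + 1) z) (x (n + 1)) ≤
          ℓ * (dist (LFS f n z) (x n) + dist (x n) (x (n + 1))) := by
        calc dist (LFS f (n + 1) z) (x (n + 1))
            = dist (f (n + 1) (LFS f n z)) (f (n + 1) (x (n + 1))) := by
              rw [hfix]; rfl
          _ ≤ ℓ * dist (LFS f n z) (x (n + 1)) := hlip _ _ _
          _ ≤ ℓ * (dist (LFS f n z) (x n) + dist (x n) (x (n + 1))) := by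
              exact mul_le_mul_of_nonneg_left (dist_triangle _ _ _) hℓ0.le
      have h2 : ℓ * (dist (LFS f n z) (x n) + dist (x n) (x (n + 1))) ≤
          ℓ * ((ℓ ^ (n + 1) * dist z (x 0) +
            ∑ j ∈ Finset.range n, ℓ ^ (n - j) * dist (x j) (x (j + 1)))
            + dist (x n) (x (n + 1))) := by
        apply mul_le_mul_of_nonneg_left _ hℓ0.le
        exact add_le_add_left (ih z) _
      refine step.trans (h2.trans (le_of_eq ?_))
      rw [Finset.sum_range_succ]
      have hsub : ∀ j ∈ Finset.range n, ℓ ^ (n + 1 - j) * dist (x j) (x (j + 1)) =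
          ℓ * (ℓ ^ (n - j) * dist (x j) (x (j + 1))) := by
        intro j hj
        rw [Finset.mem_range] at hj
        have : n + 1 - j = (n - j) + 1 := by omega
        rw [this, pow_succ]
        ring
      rw [Finset.sum_congr rfl hsub, ← Finset.mul_sum,
        show n + 1 - n = 1 by omega, pow_one, pow_succ]
      ring
  exact fun ν _ z => key ν z
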